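/- Let β₁, β₂, β₃, β₄ be vectors such that P = {∑_{j=1}^4 ε_j β_j : ε_j ∈ {±1}} is an admissible subsystem of roots with 16 elements, normalized so that the maximal norm of elements of P is 1. Then (up to permutation and sign changes) the Gram matrix (⟨β_i,β_j⟩) equals (1/4)·Id₄; the minimal root system P̄ containing P is isometric to the root system of so(8), and P̄ \ P is the root system of so(4) ⊕ so(4). -/

import Mathlib

open RealInnerProductSpace

variable {V : Type*} [NormedAddCommGroup V] [InnerProductSpace ℝ V]

/-- A root system in a Euclidean space, without the spanning condition. -/
def IsRootSet (R : Set V) : Prop :=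
  R.Finite ∧ (0 : V) ∉ R ∧
  (∀ α ∈ R, ∀ t : ℝ, t • α ∈ R → t = 1 ∨ t = -1) ∧
  (∀ α ∈ R, ∀ β ∈ R, ∃ n : ℤ, 2 * ⟪α, β⟫ / ⟪α, α⟫ = (n : ℝ)) ∧
  (∀ α ∈ R, ∀ v ∈ R, v - (2 * ⟪α, v⟫ / ⟪α, α⟫) • α ∈ R)

/-- A root system: a finite spanning set, not containing `0`, with `±α` the only
multiples of each root, satisfying integrality and closed under reflections. -/
def IsRootSystem (R : Set V) : Prop :=
  IsRootSet R ∧ Submodule.span ℝ R = ⊤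

/-- A subsystem of roots: a set spanning `V` contained in some root system of `V`. -/
def IsSubsystem (P : Set V) : Prop :=
  Submodule.span ℝ P = ⊤ ∧ ∃ R : Set V, IsRootSystem R ∧ P ⊆ R

/-- The reflection closure of `P`: the minimal set containing `P` and closed under
the reflections `s_α` for `α` in it, i.e. the minimal root system `P̄` containing `P`. -/
inductive ReflClosure (P : Set V) : V → Prop
  | base : ∀ v ∈ P, ReflClosure P v
  | refl : ∀ α v, ReflClosure P α → ReflClosure P v →
      ReflClosure P (v - (2 * ⟪α, v⟫ / ⟪α, α⟫) • α)

/-- `P` is admissible if it is a subsystem of roots and `P̄ \ P` is a root system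
(in the subspace it spans). -/
def IsAdmissible (P : Set V) : Prop :=
  IsSubsystem P ∧ IsRootSet ({v | ReflClosure P v} \ P)

namespace S13

variable {V : Type*} [NormedAddCommGroup V] [InnerProductSpace ℝ V]

lemma inner_self_pos' {u : V} (h : u ≠ 0) : 0 < ⟪u, u⟫ :=
  lt_of_le_of_ne real_inner_self_nonneg (fun e => h (inner_self_eq_zero.mp e.symm))

def Sg (d : Fin 4 → ℝ) : Prop := ∀ j, d j = 1 ∨ d j = -1

lemma Sg.sq {d : Fin 4 → ℝ} (h : Sg d) (j : Fin 4) : d j * d j = 1 := by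
  rcases h j with e | e <;> rw [e] <;> norm_num

lemma Sg.ne_zero {d : Fin 4 → ℝ} (h : Sg d) (j : Fin 4) : d j ≠ 0 := by
  rcases h j with e | e <;> rw [e] <;> norm_num

lemma Sg.one : Sg (fun _ : Fin 4 => (1:ℝ)) := fun _ => Or.inl rfl

lemma Sg.neg {d : Fin 4 → ℝ} (h : Sg d) : Sg (fun k => -d k) := fun j => by
  rcases h j with e | e <;> simp [e]

lemma Sg.mul {d e : Fin 4 → ℝ} (h : Sg d) (h' : Sg e) : Sg (fun k => d k * e k) := fun j => by
  rcases h j with a | a <;> rcases h' j with b | b <;> simp [a, b]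

lemma Sg.ite {d : Fin 4 → ℝ} (h : Sg d) (p : Fin 4 → Prop) [DecidablePred p] :
    Sg (fun k => if p k then d k else -d k) := fun j => by
  by_cases hp : p j <;> rcases h j with e | e <;> simp [hp, e]

def Wc (γ : Fin 4 → V) (d : Fin 4 → ℝ) : V := ∑ j, d j • γ j

lemma Wc_expand (γ : Fin 4 → V) (d : Fin 4 → ℝ) :
    Wc γ d = d 0 • γ 0 + d 1 • γ 1 + d 2 • γ 2 + d 3 • γ 3 := by
  simp [Wc, Fin.sum_univ_four]

lemma inner_Wc_left (γ : Fin 4 → V) (d : Fin 4 → ℝ) (x : V) :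
    ⟪Wc γ d, x⟫ = d 0 * ⟪γ 0, x⟫ + d 1 * ⟪γ 1, x⟫ + d 2 * ⟪γ 2, x⟫ + d 3 * ⟪γ 3, x⟫ := by
  simp [Wc_expand, inner_add_left, real_inner_smul_left]

lemma inner_Wc_right (γ : Fin 4 → V) (d : Fin 4 → ℝ) (x : V) :
    ⟪x, Wc γ d⟫ = d 0 * ⟪x, γ 0⟫ + d 1 * ⟪x, γ 1⟫ + d 2 * ⟪x, γ 2⟫ + d 3 * ⟪x, γ 3⟫ := by
  simp [Wc_expand, inner_add_right, real_inner_smul_right]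

attribute [irreducible] Wc

lemma Wc_neg (γ : Fin 4 → V) (d : Fin 4 → ℝ) : Wc γ (fun t => -d t) = -Wc γ d := by
  simp [Wc_expand]; module

lemma Wc_lemA_flip (γ : Fin 4 → V) (d : Fin 4 → ℝ) (j : Fin 4) :
    Wc γ (fun t => if t = j then d t else -d t) = (2 * d j) • γ j - Wc γ d := by
  fin_cases j <;> simp [Wc_expand] <;> module

lemma Wc_flp (γ : Fin 4 → V) (j : Fin 4) :
    Wc γ (fun t => if t = j then (-1:ℝ) else 1) = Wc γ (fun _ => (1:ℝ)) - (2:ℝ) • γ j := by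
  fin_cases j <;> simp [Wc_expand] <;> module

lemma Wc_flp2 (γ : Fin 4 → V) {j k : Fin 4} (hjk : j ≠ k) :
    Wc γ (fun t => if t = j ∨ t = k then (-1:ℝ) else 1) =
      Wc γ (fun _ => (1:ℝ)) - (2:ℝ) • γ j - (2:ℝ) • γ k := by
  fin_cases j <;> fin_cases k <;> simp_all <;> simp [Wc_expand] <;> module

lemma Wc_flp3 (γ : Fin 4 → V) {j k l : Fin 4} (hjk : j ≠ k) (hjl : j ≠ l) (hkl : k ≠ l) :
    Wc γ (fun t => if t = j ∨ t = k ∨ t = l then (-1:ℝ) else 1) =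
      Wc γ (fun _ => (1:ℝ)) - (2:ℝ) • γ j - (2:ℝ) • γ k - (2:ℝ) • γ l := by
  fin_cases j <;> fin_cases k <;> fin_cases l <;> simp_all <;> simp [Wc_expand] <;> module

lemma Wc_flpd (γ : Fin 4 → V) (d : Fin 4 → ℝ) (j : Fin 4) :
    Wc γ (fun t => if t = j then -d t else d t) = Wc γ d - (2 * d j) • γ j := by
  fin_cases j <;> simp [Wc_expand] <;> module


lemma fin4_cases (j : Fin 4) : j = 0 ∨ j = 1 ∨ j = 2 ∨ j = 3 := by revert j; decide

lemma classify1 {d : Fin 4 → ℝ} (h : Sg d) (hs : d 0 + d 1 + d 2 + d 3 = 2) :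
    ∃ k, d = fun t => if t = k then (-1:ℝ) else 1 := by
  rcases h 0 with h0 | h0 <;> rcases h 1 with h1 | h1 <;> rcases h 2 with h2 | h2 <;>
    rcases h 3 with h3 | h3 <;> rw [h0, h1, h2, h3] at hs <;> norm_num at hs
  · exact ⟨3, funext fun t => by fin_cases t <;> simp [h0, h1, h2, h3]⟩
  · exact ⟨2, funext fun t => by fin_cases t <;> simp [h0, h1, h2, h3]⟩
  · exact ⟨1, funext fun t => by fin_cases t <;> simp [h0, h1, h2, h3]⟩
  · exact ⟨0, funext fun t => by fin_cases t <;> simp [h0, h1, h2, h3]⟩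

lemma classify2 {d : Fin 4 → ℝ} (h : Sg d) (hs : d 0 + d 1 + d 2 + d 3 = 0) :
    ∃ k l, k ≠ l ∧ d = fun t => if t = k ∨ t = l then (-1:ℝ) else 1 := by
  rcases h 0 with h0 | h0 <;> rcases h 1 with h1 | h1 <;> rcases h 2 with h2 | h2 <;>
    rcases h 3 with h3 | h3 <;> rw [h0, h1, h2, h3] at hs <;> norm_num at hs
  · exact ⟨2, 3, by decide, funext fun t => by fin_cases t <;> simp [h0, h1, h2, h3]⟩
  · exact ⟨1, 3, by decide, funext fun t => by fin_cases t <;> simp [h0, h1, h2, h3]⟩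
  · exact ⟨1, 2, by decide, funext fun t => by fin_cases t <;> simp [h0, h1, h2, h3]⟩
  · exact ⟨0, 3, by decide, funext fun t => by fin_cases t <;> simp [h0, h1, h2, h3]⟩
  · exact ⟨0, 2, by decide, funext fun t => by fin_cases t <;> simp [h0, h1, h2, h3]⟩
  · exact ⟨0, 1, by decide, funext fun t => by fin_cases t <;> simp [h0, h1, h2, h3]⟩

lemma lemA (γ : Fin 4 → V) (P : Set V)
    (hmem : ∀ d, Sg d → Wc γ d ∈ P)
    (hinj : ∀ d d', Sg d → Sg d' → Wc γ d = Wc γ d' → d = d')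
    (hint : ∀ u ∈ P, ∀ w ∈ P, ∃ n : ℤ, 2 * ⟪u, w⟫ / ⟪u, u⟫ = (n : ℝ))
    (hip1 : ∀ u ∈ P, ⟪u, u⟫ ≤ 1)
    {d : Fin 4 → ℝ} (hd : Sg d) (h1 : ⟪Wc γ d, Wc γ d⟫ = 1) :
    ∀ j, d j * ⟪Wc γ d, γ j⟫ = 1/4 := by
  have key : ∀ j, 1/4 ≤ d j * ⟪Wc γ d, γ j⟫ := by
    intro j
    set d'' : Fin 4 → ℝ := fun t => if t = j then d t else -d t with hd''
    have hsgd'' : Sg d'' := by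
      intro t
      simp only [hd'']
      split
      · exact hd t
      · rcases hd t with e | e <;> simp [e]
    have hw' : Wc γ d'' = (2 * d j) • γ j - Wc γ d := Wc_lemA_flip γ d j
    have hip : ⟪Wc γ d, Wc γ d''⟫ = 2 * (d j * ⟪Wc γ d, γ j⟫) - 1 := by
      rw [hw', inner_sub_right, real_inner_smul_right, h1]; ring
    obtain ⟨n, hn⟩ := hint (Wc γ d) (hmem d hd) (Wc γ d'') (hmem d'' hsgd'')
    rw [h1, div_one, hip] at hn
    by_contra hlt
    push_neg at hlt
    have hn2 : (n : ℝ) ≤ -2 := by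
      have h' : (n : ℝ) < -1 := by rw [← hn]; linarith
      have h'' : n < -1 := by exact_mod_cast h'
      have : n ≤ -2 := by omega
      exact_mod_cast this
    have ht0 : d j * ⟪Wc γ d, γ j⟫ ≤ 0 := by
      have := hn.le.trans hn2; linarith
    have hle1 : ⟪Wc γ d'', Wc γ d''⟫ ≤ 1 := hip1 _ (hmem d'' hsgd'')
    have hsum : ⟪Wc γ d + Wc γ d'', Wc γ d + Wc γ d''⟫ ≤ 0 := by
      rw [real_inner_add_add_self, h1, hip]; linarith
    have hzero : Wc γ d + Wc γ d'' = 0 := by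
      have hnn := real_inner_self_nonneg (x := Wc γ d + Wc γ d'')
      exact inner_self_eq_zero.mp (le_antisymm hsum hnn)
    have hweq : Wc γ d'' = Wc γ (fun t => -d t) := by
      rw [Wc_neg]
      exact eq_neg_of_add_eq_zero_right hzero
    have heqd := hinj d'' (fun t => -d t) hsgd'' hd.neg hweq
    have hj := congrFun heqd j
    simp only [hd'', if_pos rfl] at hj
    have hne := hd.ne_zero j
    have : d j = 0 := by linarith
    exact hne this
  have hsum : d 0 * ⟪Wc γ d, γ 0⟫ + d 1 * ⟪Wc γ d, γ 1⟫ + d 2 * ⟪Wc γ d, γ 2⟫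
      + d 3 * ⟪Wc γ d, γ 3⟫ = 1 := by
    have h := inner_Wc_right γ d (Wc γ d)
    rw [h1] at h
    linarith [h]
  intro j
  have k0 := key 0; have k1 := key 1; have k2 := key 2; have k3 := key 3
  rcases fin4_cases j with rfl | rfl | rfl | rfl <;> linarith


lemma Sg_ite1 (p : Fin 4 → Prop) [DecidablePred p] :
    Sg (fun t => if p t then (-1:ℝ) else 1) := fun j => by
  by_cases h : p j <;> simp [h]

set_option maxHeartbeats 2000000 in
lemma stepB (γ : Fin 4 → V) (P : Set V)
    (hmem : ∀ d, Sg d → Wc γ d ∈ P)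
    (hallP : ∀ u ∈ P, ∃ d, Sg d ∧ u = Wc γ d)
    (hinj : ∀ d d', Sg d → Sg d' → Wc γ d = Wc γ d' → d = d')
    (hint : ∀ u ∈ P, ∀ w ∈ P, ∃ n : ℤ, 2 * ⟪u, w⟫ / ⟪u, u⟫ = (n : ℝ))
    (hip1 : ∀ u ∈ P, ⟪u, u⟫ ≤ 1)
    (h0P : (0:V) ∉ P)
    (hmult : ∀ u ∈ P, ∀ t : ℝ, t • u ∈ P → t = 1 ∨ t = -1)
    (hXcl : ∀ a ∈ ({u | ReflClosure P u} \ P), ∀ w ∈ ({u | ReflClosure P u} \ P),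
        w - (2 * ⟪a, w⟫ / ⟪a, a⟫) • a ∈ ({u | ReflClosure P u} \ P))
    (h1 : ⟪Wc γ (fun _ => (1:ℝ)), Wc γ (fun _ => (1:ℝ))⟫ = 1) (j : Fin 4) :
    ⟪Wc γ (fun t => if t = j then (-1:ℝ) else 1),
      Wc γ (fun t => if t = j then (-1:ℝ) else 1)⟫ = 1 := by
  obtain ⟨v, hvdef⟩ : ∃ v : V, v = Wc γ (fun _ => (1:ℝ)) := ⟨_, rfl⟩
  have h1v : ⟪v, v⟫ = 1 := by rw [hvdef]; exact h1
  have hvP : v ∈ P := by rw [hvdef]; exact hmem _ Sg.one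
  have hva : ∀ k, ⟪v, γ k⟫ = 1/4 := by
    intro k
    have h' := lemA γ P hmem hinj hint hip1 Sg.one h1 k
    rw [← hvdef] at h'
    simpa using h'
  have hvaC : ∀ k, ⟪γ k, v⟫ = 1/4 := fun k => (real_inner_comm _ _).trans (hva k)
  have hinner_vW : ∀ d' : Fin 4 → ℝ, ⟪v, Wc γ d'⟫ = (d' 0 + d' 1 + d' 2 + d' 3)/4 := by
    intro d'
    rw [inner_Wc_right, hva 0, hva 1, hva 2, hva 3]; ring
  obtain ⟨vj, hvjdef⟩ : ∃ vj : V, vj = Wc γ (fun t => if t = j then (-1:ℝ) else 1) := ⟨_, rfl⟩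
  rw [← hvjdef]
  have hvjP : vj ∈ P := by rw [hvjdef]; exact hmem _ (Sg_ite1 _)
  have hvjv : vj = v - (2:ℝ)•γ j := by rw [hvjdef, hvdef]; exact Wc_flp γ j
  obtain ⟨q, hq⟩ : ∃ q : ℝ, ⟪vj, vj⟫ = q := ⟨_, rfl⟩
  rw [hq]
  have hq_pos : 0 < q := by
    rw [← hq]; exact inner_self_pos' (fun h => h0P (h ▸ hvjP))
  have hq1 : q ≤ 1 := by rw [← hq]; exact hip1 _ hvjP
  have hq0 : q ≠ 0 := ne_of_gt hq_pos
  have hvvj : ⟪v, vj⟫ = 1/2 := by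
    rw [hvjv, inner_sub_right, real_inner_smul_right, h1v, hva j]; norm_num
  have hvvjC : ⟪vj, v⟫ = 1/2 := (real_inner_comm _ _).trans hvvj
  obtain ⟨m, hm⟩ := hint vj hvjP v hvP
  rw [hvvjC, hq] at hm
  have hmq : (m:ℝ) * q = 1 := by field_simp at hm; linarith
  have hm1 : (1:ℤ) ≤ m := by
    have h' : (0:ℝ) < m := by nlinarith
    have h'' : (0:ℤ) < m := by exact_mod_cast h'
    omega
  have hexp : ⟪vj - (1/2:ℝ)•v, vj - (1/2:ℝ)•v⟫ = q - 1/4 := by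
    rw [real_inner_sub_sub_self, hq, real_inner_smul_right, real_inner_smul_left,
      real_inner_smul_right, h1v, hvvjC]
    ring
  have hq4 : 1/4 ≤ q := by
    have hnn := real_inner_self_nonneg (x := vj - (1/2:ℝ)•v)
    linarith [hexp]
  have hm4 : m ≤ 4 := by
    have : (m:ℝ) ≤ 4 := by nlinarith
    exact_mod_cast this
  -- common tools for the cases m = 2, 3
  obtain ⟨x, hxdef⟩ : ∃ x : V, x = (2:ℝ)•γ j := ⟨_, rfl⟩
  have hxveq : x = v - vj := by
    linear_combination (norm := module) hvjv + hxdef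
  have hxx : ⟪x, x⟫ = q := by
    rw [hxveq, real_inner_sub_sub_self, h1v, hvvj, hq]; ring
  have hγγ : ⟪γ j, γ j⟫ = q/4 := by
    have h4 : ⟪x, x⟫ = 4*⟪γ j, γ j⟫ := by
      rw [hxdef, real_inner_smul_left, real_inner_smul_right]; ring
    linarith [hxx]
  have hvx : ⟪v, x⟫ = 1/2 := by
    rw [hxdef, real_inner_smul_right, hva j]; norm_num
  have hxvC : ⟪x, v⟫ = 1/2 := (real_inner_comm _ _).trans hvx
  have hγjx : ⟪x, γ j⟫ = q/2 := by
    rw [hxdef, real_inner_smul_left, hγγ]; ring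
  have hxnotP : x ∉ P := by
    intro hxP
    obtain ⟨d', hd', hxd⟩ := hallP x hxP
    have hs2 : d' 0 + d' 1 + d' 2 + d' 3 = 2 := by
      have h' := hinner_vW d'
      rw [← hxd, hvx] at h'
      linarith
    obtain ⟨k, rfl⟩ := classify1 hd' hs2
    have hxvk : x = v - (2:ℝ)•γ k := by rw [hxd, hvdef]; exact Wc_flp γ k
    by_cases hkj : k = j
    · subst hkj
      have hxvj : x = vj := by rw [hxvk, ← hvjv]
      have hv2 : (2:ℝ)•vj = v := by
        linear_combination (norm := module) -hxvj + hxveq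
      rcases hmult vj hvjP 2 (by rw [hv2]; exact hvP) with e | e <;> norm_num at e
    · have h0' : Wc γ (fun t => if t = j ∨ t = k then (-1:ℝ) else 1) = 0 := by
        rw [Wc_flp2 γ (fun h => hkj h.symm), ← hvdef]
        linear_combination (norm := module) -hxvk + hxdef
      exact h0P (h0' ▸ hmem _ (Sg_ite1 _))
  obtain ⟨w2, hw2def⟩ : ∃ w2 : V, w2 = v - (4:ℝ)•γ j := ⟨_, rfl⟩
  have hvw2 : ⟪v, w2⟫ = 0 := by
    rw [hw2def, inner_sub_right, real_inner_smul_right, h1v, hva j]; norm_num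
  have hxw2 : ⟪x, w2⟫ = 1/2 - 2*q := by
    rw [hw2def, inner_sub_right, real_inner_smul_right, hxvC, hγjx]; ring
  interval_cases m
  · -- m = 1
    norm_num at hmq; linarith
  · -- m = 2
    exfalso
    have hq12 : q = 1/2 := by push_cast at hmq; linarith
    have hw2notP : w2 ∉ P := by
      intro hw2P
      obtain ⟨d', hd', hw2d⟩ := hallP w2 hw2P
      have hs0 : d' 0 + d' 1 + d' 2 + d' 3 = 0 := by
        have h' := hinner_vW d'
        rw [← hw2d, hvw2] at h'
        linarith
      obtain ⟨k, l, hklne, rfl⟩ := classify2 hd' hs0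
      have hw2kl : w2 = v - (2:ℝ)•γ k - (2:ℝ)•γ l := by
        rw [hw2d, hvdef]; exact Wc_flp2 γ hklne
      by_cases hjk : j = k
      · subst hjk
        have hgl : Wc γ (fun t => if t = l then (-1:ℝ) else 1)
            = Wc γ (fun t => if t = j then (-1:ℝ) else 1) := by
          rw [Wc_flp, Wc_flp, ← hvdef]
          linear_combination (norm := module) -hw2kl + hw2def
        have heq := hinj _ _ (Sg_ite1 _) (Sg_ite1 _) hgl
        have hl := congrFun heq l
        rw [if_pos rfl, if_neg (Ne.symm hklne)] at hl
        norm_num at hl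
      · by_cases hjl : j = l
        · subst hjl
          have hgl : Wc γ (fun t => if t = k then (-1:ℝ) else 1)
              = Wc γ (fun t => if t = j then (-1:ℝ) else 1) := by
            rw [Wc_flp, Wc_flp, ← hvdef]
            linear_combination (norm := module) -hw2kl + hw2def
          have heq := hinj _ _ (Sg_ite1 _) (Sg_ite1 _) hgl
          have hk := congrFun heq k
          rw [if_pos rfl, if_neg hklne] at hk
          norm_num at hk
        · have hkl2 : (2:ℝ)•γ k + (2:ℝ)•γ l = (4:ℝ)•γ j := by
            linear_combination (norm := module) hw2kl - hw2def
          have hvT : Wc γ (fun t => if t = j ∨ t = k ∨ t = l then (-1:ℝ) else 1)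
              = v - (6:ℝ)•γ j := by
            rw [Wc_flp3 γ hjk hjl hklne, ← hvdef]
            linear_combination (norm := module) -hkl2
          have hTT : ⟪Wc γ (fun t => if t = j ∨ t = k ∨ t = l then (-1:ℝ) else 1),
              Wc γ (fun t => if t = j ∨ t = k ∨ t = l then (-1:ℝ) else 1)⟫ = 9*q - 2 := by
            rw [hvT, real_inner_sub_sub_self, h1v, real_inner_smul_right,
              real_inner_smul_left, real_inner_smul_right, hva j, hγγ]
            ring
          have := hip1 _ (hmem _ (Sg_ite1 (fun t => t = j ∨ t = k ∨ t = l)))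
          rw [hTT] at this
          rw [hq12] at this
          linarith
    -- closure contradiction
    have hclv : ReflClosure P v := ReflClosure.base v hvP
    have hclvj : ReflClosure P vj := ReflClosure.base vj hvjP
    have hclnegx : ReflClosure P (-x) := by
      have h := ReflClosure.refl v vj hclv hclvj
      have e : vj - (2*⟪v,vj⟫/⟪v,v⟫)•v = -x := by
        rw [hvvj, h1v]
        linear_combination (norm := module) hvjv + hxdef
      rw [e] at h; exact h
    have hnn0 : ⟪-x, -x⟫ ≠ 0 := by rw [inner_neg_neg, hxx]; exact hq0
    have hclx : ReflClosure P x := by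
      have h := ReflClosure.refl (-x) (-x) hclnegx hclnegx
      have e : (-x) - (2*⟪-x,-x⟫/⟪-x,-x⟫)•(-x) = x := by
        rw [mul_div_assoc, div_self hnn0]
        module
      rw [e] at h; exact h
    have hclw2 : ReflClosure P w2 := by
      have h := ReflClosure.refl x v hclx hclv
      have e : v - (2*⟪x,v⟫/⟪x,x⟫)•x = w2 := by
        rw [hxvC, hxx, hq12]
        linear_combination (norm := module) -hw2def + (-2:ℝ) • hxdef
      rw [e] at h; exact h
    have hfin := hXcl x ⟨hclx, hxnotP⟩ w2 ⟨hclw2, hw2notP⟩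
    have e : w2 - (2*⟪x,w2⟫/⟪x,x⟫)•x = v := by
      rw [hxw2, hxx, hq12]
      norm_num
      linear_combination (norm := module) hw2def + (2:ℝ) • hxdef
    rw [e] at hfin
    exact hfin.2 hvP
  · -- m = 3
    exfalso
    have hq13 : q = 1/3 := by push_cast at hmq; linarith
    have hw2notP : w2 ∉ P := by
      intro hw2P
      obtain ⟨d', hd', hw2d⟩ := hallP w2 hw2P
      have hs0 : d' 0 + d' 1 + d' 2 + d' 3 = 0 := by
        have h' := hinner_vW d'
        rw [← hw2d, hvw2] at h'
        linarith
      obtain ⟨k, l, hklne, rfl⟩ := classify2 hd' hs0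
      have hw2kl : w2 = v - (2:ℝ)•γ k - (2:ℝ)•γ l := by
        rw [hw2d, hvdef]; exact Wc_flp2 γ hklne
      by_cases hjk : j = k
      · subst hjk
        have hgl : Wc γ (fun t => if t = l then (-1:ℝ) else 1)
            = Wc γ (fun t => if t = j then (-1:ℝ) else 1) := by
          rw [Wc_flp, Wc_flp, ← hvdef]
          linear_combination (norm := module) -hw2kl + hw2def
        have heq := hinj _ _ (Sg_ite1 _) (Sg_ite1 _) hgl
        have hl := congrFun heq l
        rw [if_pos rfl, if_neg (Ne.symm hklne)] at hl
        norm_num at hl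
      · by_cases hjl : j = l
        · subst hjl
          have hgl : Wc γ (fun t => if t = k then (-1:ℝ) else 1)
              = Wc γ (fun t => if t = j then (-1:ℝ) else 1) := by
            rw [Wc_flp, Wc_flp, ← hvdef]
            linear_combination (norm := module) -hw2kl + hw2def
          have heq := hinj _ _ (Sg_ite1 _) (Sg_ite1 _) hgl
          have hk := congrFun heq k
          rw [if_pos rfl, if_neg hklne] at hk
          norm_num at hk
        · have hkl2 : (2:ℝ)•γ k + (2:ℝ)•γ l = (4:ℝ)•γ j := by
            linear_combination (norm := module) hw2kl - hw2def
          have hvT : Wc γ (fun t => if t = j ∨ t = k ∨ t = l then (-1:ℝ) else 1)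
              = v - (6:ℝ)•γ j := by
            rw [Wc_flp3 γ hjk hjl hklne, ← hvdef]
            linear_combination (norm := module) -hkl2
          have hTT : ⟪Wc γ (fun t => if t = j ∨ t = k ∨ t = l then (-1:ℝ) else 1),
              Wc γ (fun t => if t = j ∨ t = k ∨ t = l then (-1:ℝ) else 1)⟫ = 9*q - 2 := by
            rw [hvT, real_inner_sub_sub_self, h1v, real_inner_smul_right,
              real_inner_smul_left, real_inner_smul_right, hva j, hγγ]
            ring
          have hTT1 : ⟪Wc γ (fun t => if t = j ∨ t = k ∨ t = l then (-1:ℝ) else 1),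
              Wc γ (fun t => if t = j ∨ t = k ∨ t = l then (-1:ℝ) else 1)⟫ = 1 := by
            rw [hTT, hq13]; norm_num
          have hAk := lemA γ P hmem hinj hint hip1
            (Sg_ite1 (fun t => t = j ∨ t = k ∨ t = l)) hTT1 k
          rw [if_pos (Or.inr (Or.inl rfl))] at hAk
          have hTk : ⟪Wc γ (fun t => if t = j ∨ t = k ∨ t = l then (-1:ℝ) else 1), γ k⟫
              = -(1/4) := by linarith
          rw [hvT, inner_sub_left, real_inner_smul_left, hva k] at hTk
          have hgjk : ⟪γ j, γ k⟫ = 1/12 := by linarith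
          have hgkj : ⟪γ k, γ j⟫ = 1/12 := (real_inner_comm _ _).trans hgjk
          have hvkP : Wc γ (fun t => if t = k then (-1:ℝ) else 1) ∈ P := hmem _ (Sg_ite1 _)
          have hvkv : Wc γ (fun t => if t = k then (-1:ℝ) else 1) = v - (2:ℝ)•γ k := by
            rw [hvdef]; exact Wc_flp γ k
          obtain ⟨qk, hqk⟩ : ∃ qk : ℝ, ⟪Wc γ (fun t => if t = k then (-1:ℝ) else 1),
            Wc γ (fun t => if t = k then (-1:ℝ) else 1)⟫ = qk := ⟨_, rfl⟩
          have hqk_pos : 0 < qk := by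
            rw [← hqk]; exact inner_self_pos' (fun h => h0P (h ▸ hvkP))
          have hqk1 : qk ≤ 1 := by rw [← hqk]; exact hip1 _ hvkP
          have hvvk : ⟪v, Wc γ (fun t => if t = k then (-1:ℝ) else 1)⟫ = 1/2 := by
            rw [hvkv, inner_sub_right, real_inner_smul_right, h1v, hva k]; norm_num
          have hvvkC : ⟪Wc γ (fun t => if t = k then (-1:ℝ) else 1), v⟫ = 1/2 :=
            (real_inner_comm _ _).trans hvvk
          obtain ⟨p, hp⟩ := hint _ hvkP v hvP
          rw [hvvkC, hqk] at hp
          have hpq : (p:ℝ) * qk = 1 := by field_simp at hp; linarith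
          have hvkvj : ⟪Wc γ (fun t => if t = k then (-1:ℝ) else 1), vj⟫ = 1/3 := by
            rw [hvkv, hvjv]
            simp only [inner_sub_left, inner_sub_right, real_inner_smul_left,
              real_inner_smul_right]
            rw [h1v, hva j, hvaC k, hgkj]
            norm_num
          obtain ⟨nn, hnn⟩ := hint _ hvkP vj hvjP
          rw [hvkvj, hqk] at hnn
          have hnnq : (nn:ℝ) * qk = 2/3 := by field_simp at hnn; linarith
          have h23 : 2*p = 3*nn := by
            have hr : ((2*p : ℤ):ℝ) * qk = ((3*nn : ℤ):ℝ) * qk := by push_cast; linear_combination 2*hpq - 3*hnnq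
            have := mul_right_cancel₀ (ne_of_gt hqk_pos) hr
            exact_mod_cast this
          have hp1 : (1:ℤ) ≤ p := by
            have h' : (0:ℝ) < p := by
              by_contra hc
              push_neg at hc
              have hle : (p:ℝ) * qk ≤ 0 := mul_nonpos_iff.mpr (Or.inr ⟨hc, hqk_pos.le⟩)
              linarith
            have h'' : (0:ℤ) < p := by exact_mod_cast h'
            omega
          have hp3 : (3:ℤ) ≤ p := by omega
          have hqk3 : qk ≤ 1/3 := by
            have h3r : (3:ℝ) ≤ p := by exact_mod_cast hp3
            have hle : 3*qk ≤ (p:ℝ)*qk := mul_le_mul_of_nonneg_right h3r hqk_pos.le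
            linarith
          have hγk : ⟪γ k, γ k⟫ = qk/4 := by
            have h5 : v - Wc γ (fun t => if t = k then (-1:ℝ) else 1) = (2:ℝ)•γ k := by
              linear_combination (norm := module) -hvkv
            have h4 : ⟪v - Wc γ (fun t => if t = k then (-1:ℝ) else 1),
                v - Wc γ (fun t => if t = k then (-1:ℝ) else 1)⟫ = qk := by
              rw [real_inner_sub_sub_self, h1v, hvvk, hqk]; ring
            rw [h5, real_inner_smul_left, real_inner_smul_right] at h4
            linarith
          have hsubnn : ⟪γ j - γ k, γ j - γ k⟫ = qk/4 - 1/12 := by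
            rw [real_inner_sub_sub_self, hγγ, hγk, hgjk, hq13]; ring
          have hqk3' : 1/3 ≤ qk := by
            have hnn' := real_inner_self_nonneg (x := γ j - γ k)
            rw [hsubnn] at hnn'
            linarith
          have hqkeq : qk = 1/3 := le_antisymm hqk3 hqk3'
          have hjk0 : γ j - γ k = 0 := by
            have hz : ⟪γ j - γ k, γ j - γ k⟫ = 0 := by rw [hsubnn, hqkeq]; norm_num
            exact inner_self_eq_zero.mp hz
          have h2jk : (2:ℝ)•(γ j - γ k) = 0 := by rw [hjk0, smul_zero]
          have hvjvk : Wc γ (fun t => if t = j then (-1:ℝ) else 1)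
              = Wc γ (fun t => if t = k then (-1:ℝ) else 1) := by
            rw [← hvjdef]
            rw [hvjv, hvkv]
            linear_combination (norm := module) -h2jk
          have heq := hinj _ _ (Sg_ite1 _) (Sg_ite1 _) hvjvk
          have hc := congrFun heq j
          rw [if_pos rfl, if_neg hjk] at hc
          norm_num at hc
    -- closure contradiction (m = 3)
    have hclv : ReflClosure P v := ReflClosure.base v hvP
    have hclvj : ReflClosure P vj := ReflClosure.base vj hvjP
    have hclnegx : ReflClosure P (-x) := by
      have h := ReflClosure.refl v vj hclv hclvj
      have e : vj - (2*⟪v,vj⟫/⟪v,v⟫)•v = -x := by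
        rw [hvvj, h1v]
        linear_combination (norm := module) hvjv + hxdef
      rw [e] at h; exact h
    have hnn0 : ⟪-x, -x⟫ ≠ 0 := by rw [inner_neg_neg, hxx]; exact hq0
    have hclx : ReflClosure P x := by
      have h := ReflClosure.refl (-x) (-x) hclnegx hclnegx
      have e : (-x) - (2*⟪-x,-x⟫/⟪-x,-x⟫)•(-x) = x := by
        rw [mul_div_assoc, div_self hnn0]
        module
      rw [e] at h; exact h
    have hvjx : ⟪vj, x⟫ = 1/6 := by
      have hgjx : ⟪γ j, x⟫ = q/2 := by
        rw [hxdef, real_inner_smul_right, hγγ]; ring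
      rw [hvjv, inner_sub_left, real_inner_smul_left, hvx, hgjx, hq13]; norm_num
    have hclnegw2 : ReflClosure P (-w2) := by
      have h := ReflClosure.refl vj x hclvj hclx
      have e : x - (2*⟪vj,x⟫/⟪vj,vj⟫)•vj = -w2 := by
        rw [hvjx, hq, hq13]
        norm_num
        linear_combination (norm := module) hxdef - hvjv + hw2def
      rw [e] at h; exact h
    have hw2w2 : ⟪w2, w2⟫ = 1/3 := by
      rw [hw2def, real_inner_sub_sub_self, h1v, real_inner_smul_right,
        real_inner_smul_left, real_inner_smul_right, hva j, hγγ, hq13]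
      ring
    have hnw20 : ⟪-w2, -w2⟫ ≠ 0 := by rw [inner_neg_neg, hw2w2]; norm_num
    have hclw2 : ReflClosure P w2 := by
      have h := ReflClosure.refl (-w2) (-w2) hclnegw2 hclnegw2
      have e : (-w2) - (2*⟪-w2,-w2⟫/⟪-w2,-w2⟫)•(-w2) = w2 := by
        rw [mul_div_assoc, div_self hnw20]
        module
      rw [e] at h; exact h
    have hfin := hXcl w2 ⟨hclw2, hw2notP⟩ x ⟨hclx, hxnotP⟩
    have hw2x : ⟪w2, x⟫ = -(1/6) := by
      have : ⟪x, w2⟫ = -(1/6) := by rw [hxw2, hq13]; norm_num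
      rw [real_inner_comm]; exact this
    have e : x - (2*⟪w2,x⟫/⟪w2,w2⟫)•w2 = vj := by
      rw [hw2x, hw2w2]
      norm_num
      linear_combination (norm := module) hxdef + hw2def - hvjv
    rw [e] at hfin
    exact hfin.2 hvjP
  · -- m = 4
    exfalso
    have hq14 : q = 1/4 := by push_cast at hmq; linarith
    have hzero : vj - (1/2:ℝ)•v = 0 := by
      have hz : ⟪vj - (1/2:ℝ)•v, vj - (1/2:ℝ)•v⟫ = 0 := by rw [hexp, hq14]; norm_num
      exact inner_self_eq_zero.mp hz
    have hvj_half : (1/2:ℝ)•v = vj := by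
      rw [sub_eq_zero] at hzero; exact hzero.symm
    rcases hmult v hvP (1/2) (by rw [hvj_half]; exact hvjP) with e | e <;> norm_num at e


lemma Sg.ite' {d : Fin 4 → ℝ} (h : Sg d) (p : Fin 4 → Prop) [DecidablePred p] :
    Sg (fun k => if p k then -d k else d k) := fun j => by
  by_cases hp : p j <;> rcases h j with e | e <;> simp [hp, e]

lemma Wc_congr (γ : Fin 4 → V) {c c' : Fin 4 → ℝ} (h : ∀ t, c t = c' t) :
    Wc γ c = Wc γ c' := by
  rw [Wc_expand, Wc_expand, h 0, h 1, h 2, h 3]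

lemma stepD (γ : Fin 4 → V) (P : Set V)
    (hmem : ∀ d, Sg d → Wc γ d ∈ P)
    (hallP : ∀ u ∈ P, ∃ d, Sg d ∧ u = Wc γ d)
    (hG : ∀ i k, ⟪γ i, γ k⟫ = if i = k then 1/4 else 0) :
    ∀ u, ReflClosure P u → u ∈ P ∨ ∃ i, u = (2:ℝ)•γ i ∨ u = -((2:ℝ)•γ i) := by
  have hWW : ∀ a b : Fin 4 → ℝ, ⟪Wc γ a, Wc γ b⟫
      = (a 0 * b 0 + a 1 * b 1 + a 2 * b 2 + a 3 * b 3)/4 := by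
    intro a b
    rw [inner_Wc_left]
    simp only [inner_Wc_right, hG]
    simp
    try ring
  have hW1 : ∀ d, Sg d → ⟪Wc γ d, Wc γ d⟫ = 1 := by
    intro d hd
    rw [hWW, hd.sq 0, hd.sq 1, hd.sq 2, hd.sq 3]
    norm_num
  have hWγ : ∀ (a : Fin 4 → ℝ) (i), ⟪Wc γ a, γ i⟫ = a i / 4 := by
    intro a i
    rw [inner_Wc_left]
    fin_cases i <;> simp only [hG] <;> simp <;> ring
  have hγ2 : ∀ i, ⟪(2:ℝ)•γ i, (2:ℝ)•γ i⟫ = 1 := by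
    intro i
    rw [real_inner_smul_left, real_inner_smul_right, hG, if_pos rfl]
    norm_num
  intro u hu
  induction hu with
  | base w hw => exact Or.inl hw
  | refl α w hα hw ihα ihw =>
    rcases ihα with hαP | ⟨i, hαγ⟩
    · obtain ⟨a, ha, rfl⟩ := hallP α hαP
      have hA1 : ⟪Wc γ a, Wc γ a⟫ = 1 := hW1 a ha
      rcases ihw with hwP | ⟨i, hwγ⟩
      · obtain ⟨b, hb, rfl⟩ := hallP w hwP
        have hd : ∀ k, b k = a k ∨ b k = -a k := by
          intro k
          rcases ha k with e | e <;> rcases hb k with f | f <;> rw [e, f] <;> norm_num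
        rcases hd 0 with h0 | h0 <;> rcases hd 1 with h1 | h1 <;>
          rcases hd 2 with h2 | h2 <;> rcases hd 3 with h3 | h3
        -- (s,s,s,s)
        · have hip : ⟪Wc γ a, Wc γ b⟫ = 1 := by
            rw [hWW, h0, h1, h2, h3, ha.sq 0, ha.sq 1, ha.sq 2, ha.sq 3]; norm_num
          have hWb : Wc γ b = Wc γ a := Wc_congr γ (fun t => by
            rcases fin4_cases t with rfl | rfl | rfl | rfl <;> simp [h0, h1, h2, h3])
          rw [hip, hA1, hWb]
          exact Or.inl (by
            rw [show Wc γ a - (2*1/1:ℝ)•Wc γ a = Wc γ (fun k => -a k) from by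
              rw [Wc_neg]; module]
            exact hmem _ ha.neg)
        -- (s,s,s,f)
        · have hip : ⟪Wc γ a, Wc γ b⟫ = 1/2 := by
            rw [hWW, h0, h1, h2, h3]
            simp only [mul_neg]
            rw [ha.sq 0, ha.sq 1, ha.sq 2, ha.sq 3]; norm_num
          have hWb : Wc γ b = Wc γ (fun t => if t = 3 then -a t else a t) := Wc_congr γ (fun t => by
            rcases fin4_cases t with rfl | rfl | rfl | rfl <;> simp [h0, h1, h2, h3])
          rw [hip, hA1, hWb, Wc_flpd γ a 3]
          rcases ha 3 with e | e
          · exact Or.inr ⟨3, Or.inr (by rw [e]; module)⟩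
          · exact Or.inr ⟨3, Or.inl (by rw [e]; module)⟩
        -- (s,s,f,s)
        · have hip : ⟪Wc γ a, Wc γ b⟫ = 1/2 := by
            rw [hWW, h0, h1, h2, h3]
            simp only [mul_neg]
            rw [ha.sq 0, ha.sq 1, ha.sq 2, ha.sq 3]; norm_num
          have hWb : Wc γ b = Wc γ (fun t => if t = 2 then -a t else a t) := Wc_congr γ (fun t => by
            rcases fin4_cases t with rfl | rfl | rfl | rfl <;> simp [h0, h1, h2, h3])
          rw [hip, hA1, hWb, Wc_flpd γ a 2]
          rcases ha 2 with e | e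
          · exact Or.inr ⟨2, Or.inr (by rw [e]; module)⟩
          · exact Or.inr ⟨2, Or.inl (by rw [e]; module)⟩
        -- (s,s,f,f)
        · have hip : ⟪Wc γ a, Wc γ b⟫ = 0 := by
            rw [hWW, h0, h1, h2, h3]
            simp only [mul_neg]
            rw [ha.sq 0, ha.sq 1, ha.sq 2, ha.sq 3]; norm_num
          have hWb : Wc γ b = Wc γ (fun t => if t = 2 ∨ t = 3 then -a t else a t) :=
            Wc_congr γ (fun t => by
              rcases fin4_cases t with rfl | rfl | rfl | rfl <;> simp [h0, h1, h2, h3])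
          rw [hip, hA1, hWb]
          exact Or.inl (by
            rw [show Wc γ (fun t => if t = 2 ∨ t = 3 then -a t else a t) - (2*0/1:ℝ)•Wc γ a
              = Wc γ (fun t => if t = 2 ∨ t = 3 then -a t else a t) from by module]
            exact hmem _ (ha.ite' _))
        -- (s,f,s,s)
        · have hip : ⟪Wc γ a, Wc γ b⟫ = 1/2 := by
            rw [hWW, h0, h1, h2, h3]
            simp only [mul_neg]
            rw [ha.sq 0, ha.sq 1, ha.sq 2, ha.sq 3]; norm_num
          have hWb : Wc γ b = Wc γ (fun t => if t = 1 then -a t else a t) := Wc_congr γ (fun t => by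
            rcases fin4_cases t with rfl | rfl | rfl | rfl <;> simp [h0, h1, h2, h3])
          rw [hip, hA1, hWb, Wc_flpd γ a 1]
          rcases ha 1 with e | e
          · exact Or.inr ⟨1, Or.inr (by rw [e]; module)⟩
          · exact Or.inr ⟨1, Or.inl (by rw [e]; module)⟩
        -- (s,f,s,f)
        · have hip : ⟪Wc γ a, Wc γ b⟫ = 0 := by
            rw [hWW, h0, h1, h2, h3]
            simp only [mul_neg]
            rw [ha.sq 0, ha.sq 1, ha.sq 2, ha.sq 3]; norm_num
          have hWb : Wc γ b = Wc γ (fun t => if t = 1 ∨ t = 3 then -a t else a t) :=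
            Wc_congr γ (fun t => by
              rcases fin4_cases t with rfl | rfl | rfl | rfl <;> simp [h0, h1, h2, h3])
          rw [hip, hA1, hWb]
          exact Or.inl (by
            rw [show Wc γ (fun t => if t = 1 ∨ t = 3 then -a t else a t) - (2*0/1:ℝ)•Wc γ a
              = Wc γ (fun t => if t = 1 ∨ t = 3 then -a t else a t) from by module]
            exact hmem _ (ha.ite' _))
        -- (s,f,f,s)
        · have hip : ⟪Wc γ a, Wc γ b⟫ = 0 := by
            rw [hWW, h0, h1, h2, h3]
            simp only [mul_neg]
            rw [ha.sq 0, ha.sq 1, ha.sq 2, ha.sq 3]; norm_num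
          have hWb : Wc γ b = Wc γ (fun t => if t = 1 ∨ t = 2 then -a t else a t) :=
            Wc_congr γ (fun t => by
              rcases fin4_cases t with rfl | rfl | rfl | rfl <;> simp [h0, h1, h2, h3])
          rw [hip, hA1, hWb]
          exact Or.inl (by
            rw [show Wc γ (fun t => if t = 1 ∨ t = 2 then -a t else a t) - (2*0/1:ℝ)•Wc γ a
              = Wc γ (fun t => if t = 1 ∨ t = 2 then -a t else a t) from by module]
            exact hmem _ (ha.ite' _))
        -- (s,f,f,f) : agree at 0
        · have hip : ⟪Wc γ a, Wc γ b⟫ = -(1/2) := by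
            rw [hWW, h0, h1, h2, h3]
            simp only [mul_neg]
            rw [ha.sq 0, ha.sq 1, ha.sq 2, ha.sq 3]; norm_num
          have hWb : Wc γ b = Wc γ (fun t => if t = 0 then a t else -a t) := Wc_congr γ (fun t => by
            rcases fin4_cases t with rfl | rfl | rfl | rfl <;> simp [h0, h1, h2, h3])
          rw [hip, hA1, hWb, Wc_lemA_flip γ a 0]
          rcases ha 0 with e | e
          · exact Or.inr ⟨0, Or.inl (by rw [e]; module)⟩
          · exact Or.inr ⟨0, Or.inr (by rw [e]; module)⟩
        -- (f,s,s,s)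
        · have hip : ⟪Wc γ a, Wc γ b⟫ = 1/2 := by
            rw [hWW, h0, h1, h2, h3]
            simp only [mul_neg]
            rw [ha.sq 0, ha.sq 1, ha.sq 2, ha.sq 3]; norm_num
          have hWb : Wc γ b = Wc γ (fun t => if t = 0 then -a t else a t) := Wc_congr γ (fun t => by
            rcases fin4_cases t with rfl | rfl | rfl | rfl <;> simp [h0, h1, h2, h3])
          rw [hip, hA1, hWb, Wc_flpd γ a 0]
          rcases ha 0 with e | e
          · exact Or.inr ⟨0, Or.inr (by rw [e]; module)⟩
          · exact Or.inr ⟨0, Or.inl (by rw [e]; module)⟩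
        -- (f,s,s,f)
        · have hip : ⟪Wc γ a, Wc γ b⟫ = 0 := by
            rw [hWW, h0, h1, h2, h3]
            simp only [mul_neg]
            rw [ha.sq 0, ha.sq 1, ha.sq 2, ha.sq 3]; norm_num
          have hWb : Wc γ b = Wc γ (fun t => if t = 0 ∨ t = 3 then -a t else a t) :=
            Wc_congr γ (fun t => by
              rcases fin4_cases t with rfl | rfl | rfl | rfl <;> simp [h0, h1, h2, h3])
          rw [hip, hA1, hWb]
          exact Or.inl (by
            rw [show Wc γ (fun t => if t = 0 ∨ t = 3 then -a t else a t) - (2*0/1:ℝ)•Wc γ a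
              = Wc γ (fun t => if t = 0 ∨ t = 3 then -a t else a t) from by module]
            exact hmem _ (ha.ite' _))
        -- (f,s,f,s)
        · have hip : ⟪Wc γ a, Wc γ b⟫ = 0 := by
            rw [hWW, h0, h1, h2, h3]
            simp only [mul_neg]
            rw [ha.sq 0, ha.sq 1, ha.sq 2, ha.sq 3]; norm_num
          have hWb : Wc γ b = Wc γ (fun t => if t = 0 ∨ t = 2 then -a t else a t) :=
            Wc_congr γ (fun t => by
              rcases fin4_cases t with rfl | rfl | rfl | rfl <;> simp [h0, h1, h2, h3])
          rw [hip, hA1, hWb]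
          exact Or.inl (by
            rw [show Wc γ (fun t => if t = 0 ∨ t = 2 then -a t else a t) - (2*0/1:ℝ)•Wc γ a
              = Wc γ (fun t => if t = 0 ∨ t = 2 then -a t else a t) from by module]
            exact hmem _ (ha.ite' _))
        -- (f,s,f,f) : agree at 1
        · have hip : ⟪Wc γ a, Wc γ b⟫ = -(1/2) := by
            rw [hWW, h0, h1, h2, h3]
            simp only [mul_neg]
            rw [ha.sq 0, ha.sq 1, ha.sq 2, ha.sq 3]; norm_num
          have hWb : Wc γ b = Wc γ (fun t => if t = 1 then a t else -a t) := Wc_congr γ (fun t => by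
            rcases fin4_cases t with rfl | rfl | rfl | rfl <;> simp [h0, h1, h2, h3])
          rw [hip, hA1, hWb, Wc_lemA_flip γ a 1]
          rcases ha 1 with e | e
          · exact Or.inr ⟨1, Or.inl (by rw [e]; module)⟩
          · exact Or.inr ⟨1, Or.inr (by rw [e]; module)⟩
        -- (f,f,s,s)
        · have hip : ⟪Wc γ a, Wc γ b⟫ = 0 := by
            rw [hWW, h0, h1, h2, h3]
            simp only [mul_neg]
            rw [ha.sq 0, ha.sq 1, ha.sq 2, ha.sq 3]; norm_num
          have hWb : Wc γ b = Wc γ (fun t => if t = 0 ∨ t = 1 then -a t else a t) :=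
            Wc_congr γ (fun t => by
              rcases fin4_cases t with rfl | rfl | rfl | rfl <;> simp [h0, h1, h2, h3])
          rw [hip, hA1, hWb]
          exact Or.inl (by
            rw [show Wc γ (fun t => if t = 0 ∨ t = 1 then -a t else a t) - (2*0/1:ℝ)•Wc γ a
              = Wc γ (fun t => if t = 0 ∨ t = 1 then -a t else a t) from by module]
            exact hmem _ (ha.ite' _))
        -- (f,f,s,f) : agree at 2
        · have hip : ⟪Wc γ a, Wc γ b⟫ = -(1/2) := by
            rw [hWW, h0, h1, h2, h3]
            simp only [mul_neg]
            rw [ha.sq 0, ha.sq 1, ha.sq 2, ha.sq 3]; norm_num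
          have hWb : Wc γ b = Wc γ (fun t => if t = 2 then a t else -a t) := Wc_congr γ (fun t => by
            rcases fin4_cases t with rfl | rfl | rfl | rfl <;> simp [h0, h1, h2, h3])
          rw [hip, hA1, hWb, Wc_lemA_flip γ a 2]
          rcases ha 2 with e | e
          · exact Or.inr ⟨2, Or.inl (by rw [e]; module)⟩
          · exact Or.inr ⟨2, Or.inr (by rw [e]; module)⟩
        -- (f,f,f,s) : agree at 3
        · have hip : ⟪Wc γ a, Wc γ b⟫ = -(1/2) := by
            rw [hWW, h0, h1, h2, h3]
            simp only [mul_neg]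
            rw [ha.sq 0, ha.sq 1, ha.sq 2, ha.sq 3]; norm_num
          have hWb : Wc γ b = Wc γ (fun t => if t = 3 then a t else -a t) := Wc_congr γ (fun t => by
            rcases fin4_cases t with rfl | rfl | rfl | rfl <;> simp [h0, h1, h2, h3])
          rw [hip, hA1, hWb, Wc_lemA_flip γ a 3]
          rcases ha 3 with e | e
          · exact Or.inr ⟨3, Or.inl (by rw [e]; module)⟩
          · exact Or.inr ⟨3, Or.inr (by rw [e]; module)⟩
        -- (f,f,f,f)
        · have hip : ⟪Wc γ a, Wc γ b⟫ = -1 := by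
            rw [hWW, h0, h1, h2, h3]
            simp only [mul_neg]
            rw [ha.sq 0, ha.sq 1, ha.sq 2, ha.sq 3]; norm_num
          have hWb : Wc γ b = Wc γ (fun t => -a t) := Wc_congr γ (fun t => by
            rcases fin4_cases t with rfl | rfl | rfl | rfl <;> simp [h0, h1, h2, h3])
          rw [hip, hA1, hWb, Wc_neg]
          exact Or.inl (by
            rw [show -Wc γ a - (2*(-1)/1:ℝ)•Wc γ a = Wc γ a from by module]
            exact hmem a ha)
      · -- α ∈ P, w = ±2γ i
        have hin : ⟪Wc γ a, (2:ℝ)•γ i⟫ = a i / 2 := by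
          rw [real_inner_smul_right, hWγ]; ring
        rcases hwγ with rfl | rfl
        · rw [hin, hA1]
          rcases ha i with e | e
          · exact Or.inl (by
              rw [show (2:ℝ)•γ i - (2*(a i/2)/1)•Wc γ a
                = Wc γ (fun k => if k = i then a k else -a k) from by
                rw [Wc_lemA_flip γ a i, e]; module]
              exact hmem _ (ha.ite _))
          · exact Or.inl (by
              rw [show (2:ℝ)•γ i - (2*(a i/2)/1)•Wc γ a
                = Wc γ (fun t => if t = i then -a t else a t) from by
                rw [Wc_flpd γ a i, e]; module]
              exact hmem _ (ha.ite' _))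
        · rw [show (⟪Wc γ a, -((2:ℝ)•γ i)⟫ : ℝ) = -(a i/2) from by
            rw [inner_neg_right, hin], hA1]
          rcases ha i with e | e
          · exact Or.inl (by
              rw [show -((2:ℝ)•γ i) - (2*(-(a i/2))/1)•Wc γ a
                = Wc γ (fun t => if t = i then -a t else a t) from by
                rw [Wc_flpd γ a i, e]; module]
              exact hmem _ (ha.ite' _))
          · exact Or.inl (by
              rw [show -((2:ℝ)•γ i) - (2*(-(a i/2))/1)•Wc γ a
                = Wc γ (fun k => -(if k = i then -a k else a k)) from by
                rw [Wc_neg, Wc_flpd γ a i, e]; module]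
              exact hmem _ ((ha.ite' _).neg))
    · -- α = ±2γ i
      rcases ihw with hwP | ⟨k, hwγ⟩
      · obtain ⟨b, hb, rfl⟩ := hallP w hwP
        have hin : ⟪(2:ℝ)•γ i, Wc γ b⟫ = b i / 2 := by
          rw [real_inner_smul_left, real_inner_comm, hWγ]; ring
        rcases hαγ with rfl | rfl
        · rw [hin, hγ2 i]
          exact Or.inl (by
            rw [show Wc γ b - (2*(b i/2)/1)•((2:ℝ)•γ i)
              = Wc γ (fun t => if t = i then -b t else b t) from by
              rw [Wc_flpd γ b i]; module]
            exact hmem _ (hb.ite' _))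
        · rw [show (⟪-((2:ℝ)•γ i), Wc γ b⟫ : ℝ) = -(b i/2) from by
            rw [inner_neg_left, hin],
            show (⟪-((2:ℝ)•γ i), -((2:ℝ)•γ i)⟫ : ℝ) = 1 from by
            rw [inner_neg_neg, hγ2 i]]
          exact Or.inl (by
            rw [show Wc γ b - (2*(-(b i/2))/1)•(-((2:ℝ)•γ i))
              = Wc γ (fun t => if t = i then -b t else b t) from by
              rw [Wc_flpd γ b i]; module]
            exact hmem _ (hb.ite' _))
      · have hgik : ∀ s t : ℝ, ⟪s•γ i, t•γ k⟫ = s*t*(if i = k then 1/4 else 0) := by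
          intro s t
          rw [real_inner_smul_left, real_inner_smul_right, hG]; ring
        by_cases hik : i = k
        · subst hik
          rcases hαγ with rfl | rfl <;> rcases hwγ with rfl | rfl
          · rw [show (⟪(2:ℝ)•γ i, (2:ℝ)•γ i⟫ : ℝ) = 1 from hγ2 i]
            exact Or.inr ⟨i, Or.inr (by module)⟩
          · rw [show (⟪(2:ℝ)•γ i, -((2:ℝ)•γ i)⟫ : ℝ) = -1 from by
              rw [inner_neg_right, hγ2 i], hγ2 i]
            exact Or.inr ⟨i, Or.inl (by module)⟩
          · rw [show (⟪-((2:ℝ)•γ i), (2:ℝ)•γ i⟫ : ℝ) = -1 from by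
              rw [inner_neg_left, hγ2 i],
              show (⟪-((2:ℝ)•γ i), -((2:ℝ)•γ i)⟫ : ℝ) = 1 from by
              rw [inner_neg_neg, hγ2 i]]
            exact Or.inr ⟨i, Or.inr (by module)⟩
          · rw [show (⟪-((2:ℝ)•γ i), -((2:ℝ)•γ i)⟫ : ℝ) = 1 from by
              rw [inner_neg_neg, hγ2 i]]
            exact Or.inr ⟨i, Or.inl (by module)⟩
        · have hz : ∀ s t : ℝ, ⟪s•γ i, t•γ k⟫ = 0 := by
            intro s t; rw [hgik, if_neg hik]; ring
          rcases hαγ with rfl | rfl <;> rcases hwγ with rfl | rfl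
          · rw [show (⟪(2:ℝ)•γ i, (2:ℝ)•γ k⟫ : ℝ) = 0 from hz 2 2, hγ2 i]
            exact Or.inr ⟨k, Or.inl (by module)⟩
          · rw [show (⟪(2:ℝ)•γ i, -((2:ℝ)•γ k)⟫ : ℝ) = 0 from by
              rw [inner_neg_right, hz 2 2]; ring, hγ2 i]
            exact Or.inr ⟨k, Or.inr (by module)⟩
          · rw [show (⟪-((2:ℝ)•γ i), (2:ℝ)•γ k⟫ : ℝ) = 0 from by
              rw [inner_neg_left, hz 2 2]; ring,
              show (⟪-((2:ℝ)•γ i), -((2:ℝ)•γ i)⟫ : ℝ) = 1 from by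
              rw [inner_neg_neg, hγ2 i]]
            exact Or.inr ⟨k, Or.inl (by module)⟩
          · rw [show (⟪-((2:ℝ)•γ i), -((2:ℝ)•γ k)⟫ : ℝ) = 0 from by
              rw [inner_neg_neg, hz 2 2],
              show (⟪-((2:ℝ)•γ i), -((2:ℝ)•γ i)⟫ : ℝ) = 1 from by
              rw [inner_neg_neg, hγ2 i]]
            exact Or.inr ⟨k, Or.inr (by module)⟩


end S13

open S13 in
/-- If `P = {∑_{j=1}^4 εⱼβⱼ}` is an admissible subsystem of roots with 16 elements and
maximal norm `1`, then up to permutation and sign changes the Gram matrix is `(1/4)·Id₄`,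
the minimal root system `P̄` containing `P` is `P ∪ {±2βᵢ}` (the root system of `so(8)`),
and `P̄ \ P = {±2βᵢ}` (the root system of `so(4) ⊕ so(4)`). -/
theorem stmt_13 (β : Fin 4 → V) (P : Set V)
    (hPdef : P = {v : V | ∃ ε : Fin 4 → ℝ,
      (∀ j, ε j = 1 ∨ ε j = -1) ∧ v = ∑ j, ε j • β j})
    (hP : IsAdmissible P) (hcard : P.ncard = 16)
    (hmax : ∀ v ∈ P, ‖v‖ ≤ 1) (hone : ∃ v ∈ P, ‖v‖ = 1) :
    (∃ (σ : Equiv.Perm (Fin 4)) (s : Fin 4 → ℝ), (∀ j, s j = 1 ∨ s j = -1) ∧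
      (∀ i j, ⟪s i • β (σ i), s j • β (σ j)⟫ = if i = j then 1/4 else 0)) ∧
    {v : V | ReflClosure P v} =
      P ∪ {v : V | ∃ i, v = (2 : ℝ) • β i ∨ v = -((2 : ℝ) • β i)} ∧
    {v : V | ReflClosure P v} \ P =
      {v : V | ∃ i, v = (2 : ℝ) • β i ∨ v = -((2 : ℝ) • β i)} := by
  classical
  obtain ⟨⟨hspan, R, ⟨⟨hRfin, hR0, hRmult, hRint, hRrefl⟩, hRspan⟩, hPR⟩, hXroot⟩ := hP
  obtain ⟨-, -, -, -, hXcl⟩ := hXroot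
  have h0P : (0:V) ∉ P := fun h => hR0 (hPR h)
  have hint : ∀ u ∈ P, ∀ w ∈ P, ∃ n : ℤ, 2*⟪u,w⟫/⟪u,u⟫ = (n:ℝ) :=
    fun u hu w hw => hRint u (hPR hu) w (hPR hw)
  have hip1 : ∀ u ∈ P, ⟪u,u⟫ ≤ 1 := by
    intro u hu
    have h := hmax u hu
    rw [real_inner_self_eq_norm_sq]
    nlinarith [norm_nonneg u]
  have hmult : ∀ u ∈ P, ∀ t : ℝ, t•u ∈ P → t = 1 ∨ t = -1 :=
    fun u hu t ht => hRmult u (hPR hu) t (hPR ht)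
  -- injectivity of sign sums from the cardinality hypothesis
  obtain ⟨F, hFdef⟩ : ∃ F : (Fin 4 → Bool) → V,
      F = fun s => ∑ j, (if s j then (1:ℝ) else -1) • β j := ⟨_, rfl⟩
  have hPF : P = ↑(Finset.image F Finset.univ) := by
    rw [hPdef]
    ext u
    simp only [Set.mem_setOf_eq, Finset.coe_image, Set.mem_image, Finset.mem_coe,
      Finset.mem_univ, Finset.coe_univ, Set.image_univ, Set.mem_range]
    constructor
    · rintro ⟨ε, hε, rfl⟩
      refine ⟨fun j => if ε j = 1 then true else false, ?_⟩
      rw [hFdef]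
      refine Finset.sum_congr rfl fun j _ => ?_
      rcases hε j with e | e
      · simp [e]
      · norm_num [e]
    · rintro ⟨s, rfl⟩
      exact ⟨fun j => if s j then 1 else -1,
        fun j => by by_cases h : s j <;> simp [h], by rw [hFdef]⟩
  have hcard16 : (Finset.image F Finset.univ).card = (Finset.univ : Finset (Fin 4 → Bool)).card := by
    rw [← Set.ncard_coe_finset, ← hPF, hcard]
    simp [Fintype.card_fun]
  have hFinj : Function.Injective F := by
    have h := Finset.card_image_iff.mp hcard16
    intro s t hst
    exact h (Finset.mem_coe.mpr (Finset.mem_univ s)) (Finset.mem_coe.mpr (Finset.mem_univ t)) hst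
  have hsum_inj : ∀ ε ε' : Fin 4 → ℝ, (∀ j, ε j = 1 ∨ ε j = -1) → (∀ j, ε' j = 1 ∨ ε' j = -1) →
      (∑ j, ε j • β j) = (∑ j, ε' j • β j) → ε = ε' := by
    intro ε ε' hε hε' heq
    have hF : ∀ η : Fin 4 → ℝ, (∀ j, η j = 1 ∨ η j = -1) →
        F (fun j => if η j = 1 then true else false) = ∑ j, η j • β j := by
      intro η hη
      rw [hFdef]
      refine Finset.sum_congr rfl fun j _ => ?_
      rcases hη j with e | e
      · simp [e]
      · norm_num [e]
    have hkey := hFinj ((hF ε hε).trans (heq.trans (hF ε' hε').symm))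
    funext j
    have hj := congrFun hkey j
    rcases hε j with e | e <;> rcases hε' j with f | f <;> rw [e, f] <;>
      rw [e, f] at hj <;> norm_num at hj
  -- set up γ
  obtain ⟨v0, hv0P, hv0n⟩ := hone
  obtain ⟨εh, hεh, hv0eq⟩ : ∃ ε : Fin 4 → ℝ, (∀ j, ε j = 1 ∨ ε j = -1) ∧
      v0 = ∑ j, ε j • β j := by rw [hPdef] at hv0P; exact hv0P
  obtain ⟨γ, hγdef⟩ : ∃ γ : Fin 4 → V, γ = fun j => εh j • β j := ⟨_, rfl⟩
  have hWcβ : ∀ d : Fin 4 → ℝ, Wc γ d = ∑ j, (d j * εh j) • β j := by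
    intro d
    rw [Wc_expand, hγdef, Fin.sum_univ_four]
    simp [smul_smul]
  have hmemW : ∀ d, Sg d → Wc γ d ∈ P := by
    intro d hd
    rw [hWcβ, hPdef]
    exact ⟨fun j => d j * εh j, hd.mul hεh, rfl⟩
  have hallW : ∀ u ∈ P, ∃ d, Sg d ∧ u = Wc γ d := by
    intro u hu
    rw [hPdef] at hu
    obtain ⟨ε, hε, rfl⟩ := hu
    refine ⟨fun j => ε j * εh j, Sg.mul hε hεh, ?_⟩
    rw [hWcβ]
    refine Finset.sum_congr rfl fun j _ => ?_
    rcases hεh j with e | e <;> rw [e] <;> norm_num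
  have hinjW : ∀ d d', Sg d → Sg d' → Wc γ d = Wc γ d' → d = d' := by
    intro d d' hd hd' heq
    rw [hWcβ, hWcβ] at heq
    have hkey := hsum_inj _ _ (hd.mul hεh) (hd'.mul hεh) heq
    funext j
    have hj := congrFun hkey j
    rcases hεh j with e | e <;> rw [e] at hj <;> simpa using hj
  have h1 : ⟪Wc γ (fun _ => (1:ℝ)), Wc γ (fun _ => (1:ℝ))⟫ = 1 := by
    have hv0W : Wc γ (fun _ => (1:ℝ)) = v0 := by
      rw [hWcβ, hv0eq]
      exact Finset.sum_congr rfl fun j _ => by rw [one_mul]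
    rw [hv0W, real_inner_self_eq_norm_sq, hv0n]
    norm_num
  -- Step B: all flipped vectors have norm 1
  have hBB : ∀ j, ⟪Wc γ (fun t => if t = j then (-1:ℝ) else 1),
      Wc γ (fun t => if t = j then (-1:ℝ) else 1)⟫ = 1 :=
    fun j => stepB γ P hmemW hallW hinjW hint hip1 h0P hmult hXcl h1 j
  have hva : ∀ k, ⟪Wc γ (fun _ => (1:ℝ)), γ k⟫ = 1/4 := fun k => by
    have := lemA γ P hmemW hinjW hint hip1 Sg.one h1 k
    simpa using this
  -- Step C: Gram matrix
  have hG : ∀ i k, ⟪γ i, γ k⟫ = if i = k then 1/4 else 0 := by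
    intro i k
    by_cases hik : i = k
    · subst hik
      rw [if_pos rfl]
      have hflip := hBB i
      rw [Wc_flp γ i, real_inner_sub_sub_self, h1, real_inner_smul_right,
        real_inner_smul_left, real_inner_smul_right, hva i] at hflip
      linarith
    · rw [if_neg hik]
      have hA := lemA γ P hmemW hinjW hint hip1 (Sg_ite1 (fun t => t = i)) (hBB i) k
      rw [if_neg (Ne.symm hik)] at hA
      rw [Wc_flp γ i, inner_sub_left, real_inner_smul_left, hva k] at hA
      linarith
  refine ⟨⟨Equiv.refl _, εh, hεh, fun i j => ?_⟩, ?_, ?_⟩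
  · have := hG i j
    rw [hγdef] at this
    simpa using this
  all_goals {
    have hDD := stepD γ P hmemW hallW hG
    have hcl2γ : ∀ i, ReflClosure P (-((2:ℝ)•γ i)) ∧ ReflClosure P ((2:ℝ)•γ i) := by
      intro i
      have hclv : ReflClosure P (Wc γ (fun _ => (1:ℝ))) := ReflClosure.base _ (hmemW _ Sg.one)
      have hclvi : ReflClosure P (Wc γ (fun t => if t = i then (-1:ℝ) else 1)) :=
        ReflClosure.base _ (hmemW _ (Sg_ite1 _))
      have hvvi : ⟪Wc γ (fun _ => (1:ℝ)), Wc γ (fun t => if t = i then (-1:ℝ) else 1)⟫ = 1/2 := by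
        rw [Wc_flp γ i, inner_sub_right, real_inner_smul_right, h1, hva i]; norm_num
      have hneg : ReflClosure P (-((2:ℝ)•γ i)) := by
        have h := ReflClosure.refl _ _ hclv hclvi
        rw [show Wc γ (fun t => if t = i then (-1:ℝ) else 1)
            - (2*⟪Wc γ (fun _ => (1:ℝ)), Wc γ (fun t => if t = i then (-1:ℝ) else 1)⟫
              /⟪Wc γ (fun _ => (1:ℝ)), Wc γ (fun _ => (1:ℝ))⟫)•Wc γ (fun _ => (1:ℝ))
            = -((2:ℝ)•γ i) from by
          rw [hvvi, h1, Wc_flp γ i]; module] at h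
        exact h
      refine ⟨hneg, ?_⟩
      have hn0 : ⟪-((2:ℝ)•γ i), -((2:ℝ)•γ i)⟫ ≠ 0 := by
        rw [inner_neg_neg, real_inner_smul_left, real_inner_smul_right, hG i i]
        norm_num
      have h := ReflClosure.refl _ _ hneg hneg
      rw [show -((2:ℝ)•γ i) - (2*⟪-((2:ℝ)•γ i), -((2:ℝ)•γ i)⟫
          /⟪-((2:ℝ)•γ i), -((2:ℝ)•γ i)⟫)•(-((2:ℝ)•γ i)) = (2:ℝ)•γ i from by
        rw [mul_div_assoc, div_self hn0]; module] at h
      exact h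
    have hnotP2γ : ∀ (u : V) i, u = (2:ℝ)•γ i ∨ u = -((2:ℝ)•γ i) → u ∉ P := by
      intro u i hcase hu
      obtain ⟨d, hd, rfl⟩ := hallW u hu
      have hWi : ⟪γ i, Wc γ d⟫ = d i / 4 := by
        rw [real_inner_comm, inner_Wc_left]
        fin_cases i <;> simp only [hG] <;> simp <;> ring
      rcases hcase with e | e
      · have h2 : ⟪γ i, Wc γ d⟫ = 1/2 := by
          rw [e, real_inner_smul_right, hG i i]; norm_num
        rcases hd i with f | f <;> rw [f] at hWi <;> rw [hWi] at h2 <;> norm_num at h2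
      · have h2 : ⟪γ i, Wc γ d⟫ = -(1/2) := by
          rw [e, inner_neg_right, real_inner_smul_right, hG i i]; norm_num
        rcases hd i with f | f <;> rw [f] at hWi <;> rw [hWi] at h2 <;> norm_num at h2
    have hβγ : ∀ i, ((2:ℝ)•β i = (2:ℝ)•γ i ∨ (2:ℝ)•β i = -((2:ℝ)•γ i)) := by
      intro i
      rcases hεh i with e | e
      · left; rw [hγdef]; simp [e]
      · right; rw [hγdef]; simp [e]
    have hset : {w : V | ∃ i, w = (2:ℝ)•β i ∨ w = -((2:ℝ)•β i)}
        = {w : V | ∃ i, w = (2:ℝ)•γ i ∨ w = -((2:ℝ)•γ i)} := by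
      ext w
      simp only [Set.mem_setOf_eq]
      constructor
      · rintro ⟨i, rfl | rfl⟩
        · rcases hβγ i with hb | hb
          · exact ⟨i, Or.inl hb⟩
          · exact ⟨i, Or.inr hb⟩
        · rcases hβγ i with hb | hb
          · exact ⟨i, Or.inr (by simp [hb])⟩
          · exact ⟨i, Or.inl (by simp [hb])⟩
      · rintro ⟨i, rfl | rfl⟩
        · rcases hβγ i with hb | hb
          · exact ⟨i, Or.inl hb.symm⟩
          · exact ⟨i, Or.inr (by simp [hb])⟩
        · rcases hβγ i with hb | hb
          · exact ⟨i, Or.inr (by simp [hb])⟩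
          · exact ⟨i, Or.inl (by simp [hb])⟩
    have hclosure : {w : V | ReflClosure P w}
        = P ∪ {w : V | ∃ i, w = (2:ℝ)•γ i ∨ w = -((2:ℝ)•γ i)} := by
      ext w
      simp only [Set.mem_setOf_eq, Set.mem_union]
      constructor
      · intro hw
        exact hDD w hw
      · rintro (hw | ⟨i, rfl | rfl⟩)
        · exact ReflClosure.base w hw
        · exact (hcl2γ i).2
        · exact (hcl2γ i).1
    first
    | (rw [hclosure, hset]; done)
    | (rw [hclosure, hset]
       ext w
       simp only [Set.mem_diff, Set.mem_union, Set.mem_setOf_eq]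
       constructor
       · rintro ⟨hw | hw, hnP⟩
         · exact absurd hw hnP
         · exact hw
       · intro hw
         obtain ⟨i, hi⟩ := hw
         exact ⟨Or.inr ⟨i, hi⟩, hnotP2γ w i hi⟩)
  }
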